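/- For every real number p with 1/2 < p < 1, there exists a monotone factor from the Bernoulli shift B(1-p, p) to the Bernoulli shift B(p, 1-p): a measurable map φ : {0,1}^ℤ → {0,1}^ℤ such that the pushforward of μ under φ equals ν, φ ∘ T = T ∘ φ holds μ-almost everywhere, and φ(x)_i ≤ x_i for all i ∈ ℤ and all x ∈ {0,1}^ℤ. (This is the equal-entropy, two-symbol case of the monotone factor problem.) -/

import Mathlib

open MeasureTheory Set

/-- The left shift `T` on `{0,1}^ℤ`, `(Tx)_i = x_{i+1}`. -/
def shift (x : ℤ → Bool) : ℤ → Bool := fun i => x (i + 1)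

/-- `μ` is the law of the Bernoulli shift whose coordinates are i.i.d. taking the value
`1` (`true`) with probability `p` and `0` (`false`) with probability `1 - p`. -/
def IsBernoulliShift (p : ℝ) (μ : Measure (ℤ → Bool)) : Prop :=
  IsProbabilityMeasure μ ∧
    ∀ (s : Finset ℤ) (f : ℤ → Bool),
      μ {x | ∀ i ∈ s, x i = f i} =
        ENNReal.ofReal (∏ i ∈ s, if f i then p else 1 - p)

namespace MF

noncomputable section

/-- Cylinder set. -/
def cyl (s : Finset ℤ) (f : ℤ → Bool) : Set (ℤ → Bool) := {x | ∀ i ∈ s, x i = f i}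

/-- Cylinders with coordinates in `J`. -/
def CylIn (J : Set ℤ) : Set (Set (ℤ → Bool)) :=
  {A | ∃ s : Finset ℤ, ↑s ⊆ J ∧ ∃ f, A = cyl s f}

lemma measurableSet_cyl (s : Finset ℤ) (f : ℤ → Bool) : MeasurableSet (cyl s f) := by
  have : cyl s f = ⋂ i ∈ s, {x : ℤ → Bool | x i = f i} := by
    ext x; simp [cyl]
  rw [this]
  exact Set.Finite.measurableSet_biInter s.finite_toSet
    (fun i _ => (measurable_pi_apply i) (MeasurableSet.singleton (f i)) : ∀ i ∈ s, MeasurableSet ((fun x : ℤ → Bool => x i) ⁻¹' {f i}))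

lemma isPiSystem_cylIn (J : Set ℤ) : IsPiSystem (CylIn J) := by
  rintro A ⟨s, hs, f, rfl⟩ B ⟨t, ht, g, rfl⟩ hne
  classical
  obtain ⟨x, hxf, hxg⟩ := hne
  refine ⟨s ∪ t, by simp [Finset.coe_union, Set.union_subset hs ht], fun i => if i ∈ s then f i else g i, ?_⟩
  ext z
  constructor
  · rintro ⟨hzf, hzg⟩ i hi
    rcases Finset.mem_union.1 hi with h | h
    · simp [h, hzf i h]
    · by_cases h' : i ∈ s
      · simp [h', hzf i h']
      · simp [h', hzg i h]
  · intro hz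
    constructor
    · intro i hi
      have := hz i (Finset.mem_union_left _ hi); simpa [hi] using this
    · intro i hi
      have := hz i (Finset.mem_union_right _ hi)
      simp only at this
      by_cases h' : i ∈ s
      · rw [if_pos h'] at this
        rw [this, ← hxf i h', hxg i hi]
      · rwa [if_neg h'] at this

lemma generateFrom_cylIn_le (J : Set ℤ) :
    MeasurableSpace.generateFrom (CylIn J) ≤ (inferInstance : MeasurableSpace (ℤ → Bool)) := by
  refine MeasurableSpace.generateFrom_le ?_
  rintro A ⟨s, _, f, rfl⟩
  exact measurableSet_cyl s f

lemma pi_eq_generateFrom_cylIn_univ :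
    (inferInstance : MeasurableSpace (ℤ → Bool)) = MeasurableSpace.generateFrom (CylIn univ) := by
  refine le_antisymm ?_ (generateFrom_cylIn_le univ)
  have h : ∀ a : ℤ, @Measurable _ _ (MeasurableSpace.generateFrom (CylIn univ)) _
      (fun x : ℤ → Bool => x a) := by
    intro a
    refine @measurable_to_countable Bool (ℤ → Bool) _ _
      (MeasurableSpace.generateFrom (CylIn univ)) (fun x => x a) ?_
    intro y
    refine MeasurableSpace.measurableSet_generateFrom ⟨{a}, by simp, y, ?_⟩
    ext z; simp [cyl]
  intro S hS
  exact (@measurable_pi_iff (ℤ → Bool) ℤ (fun _ => Bool)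
    (MeasurableSpace.generateFrom (CylIn univ)) _ id).mpr h hS


/-! ### The queue walk -/

def walk (x : ℤ → Bool) (n : ℤ) (m : ℕ) : ℤ :=
  ∑ j ∈ Finset.range m, (if x (n - j) then (-1 : ℤ) else 1)

def Mge (x : ℤ → Bool) (n q : ℤ) : Prop := ∃ m, q ≤ walk x n m

open Classical in
/-- departure at time `i` -/
def dep (x : ℤ → Bool) (i : ℤ) : Bool := if Mge x (i - 1) 1 then x i else false

def tr (k : ℤ) (x : ℤ → Bool) : ℤ → Bool := fun i => x (i + k)

lemma dep_eq_true_iff {x : ℤ → Bool} {i : ℤ} :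
    dep x i = true ↔ x i = true ∧ Mge x (i - 1) 1 := by
  classical
  unfold dep
  by_cases h : Mge x (i - 1) 1 <;> simp [h]

lemma dep_le (x : ℤ → Bool) (i : ℤ) : dep x i ≤ x i := by
  classical
  unfold dep
  by_cases h : Mge x (i - 1) 1 <;> simp [h]

lemma walk_zero (x : ℤ → Bool) (n : ℤ) : walk x n 0 = 0 := by simp [walk]

lemma walk_tr (k : ℤ) (x : ℤ → Bool) (n : ℤ) (m : ℕ) :
    walk (tr k x) n m = walk x (n + k) m := by
  unfold walk tr
  refine Finset.sum_congr rfl fun j _ => ?_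
  have : n - j + k = n + k - j := by ring
  rw [this]

lemma Mge_tr (k : ℤ) (x : ℤ → Bool) (n q : ℤ) : Mge (tr k x) n q ↔ Mge x (n + k) q := by
  unfold Mge
  simp only [walk_tr]

lemma dep_tr (k : ℤ) (x : ℤ → Bool) (i : ℤ) : dep (tr k x) i = dep x (i + k) := by
  classical
  unfold dep
  have e : i + k - 1 = i - 1 + k := by ring
  rw [e, ← Mge_tr k x (i - 1) 1]
  rfl

lemma walk_succ (x : ℤ → Bool) (n : ℤ) (m : ℕ) :
    walk x n (m + 1) = (if x n then (-1 : ℤ) else 1) + walk x (n - 1) m := by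
  unfold walk
  rw [Finset.sum_range_succ']
  simp only [Nat.cast_zero, sub_zero, Nat.cast_add, Nat.cast_one]
  rw [add_comm]
  congr 1
  refine Finset.sum_congr rfl fun j _ => ?_
  have : n - (j + 1) = n - 1 - j := by ring
  rw [this]

lemma Mge_of_nonpos {x : ℤ → Bool} {n q : ℤ} (hq : q ≤ 0) : Mge x n q :=
  ⟨0, by simpa [walk_zero] using hq⟩

lemma Mge_anti {x : ℤ → Bool} {n q q' : ℤ} (h : q ≤ q') (h' : Mge x n q') : Mge x n q := by
  obtain ⟨m, hm⟩ := h'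
  exact ⟨m, le_trans h hm⟩

lemma Mge_rec_true {x : ℤ → Bool} {n q : ℤ} (hq : 1 ≤ q) (hx : x n = true) :
    Mge x n q ↔ Mge x (n - 1) (q + 1) := by
  unfold Mge
  constructor
  · rintro ⟨m, hm⟩
    cases m with
    | zero => rw [walk_zero] at hm; omega
    | succ m =>
      rw [walk_succ] at hm
      simp only [hx, if_true] at hm
      exact ⟨m, by omega⟩
  · rintro ⟨m, hm⟩
    refine ⟨m + 1, ?_⟩
    rw [walk_succ]
    simp only [hx, if_true]
    omega

lemma Mge_rec_false {x : ℤ → Bool} {n q : ℤ} (hq : 1 ≤ q) (hx : x n = false) :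
    Mge x n q ↔ Mge x (n - 1) (q - 1) := by
  unfold Mge
  constructor
  · rintro ⟨m, hm⟩
    cases m with
    | zero => rw [walk_zero] at hm; omega
    | succ m =>
      rw [walk_succ] at hm
      simp only [hx, Bool.false_eq_true, if_false] at hm
      exact ⟨m, by omega⟩
  · rintro ⟨m, hm⟩
    refine ⟨m + 1, ?_⟩
    rw [walk_succ]
    simp only [hx, Bool.false_eq_true, if_false]
    omega

lemma walk_le (x : ℤ → Bool) (n : ℤ) (m : ℕ) : walk x n m ≤ m := by
  unfold walk
  calc ∑ j ∈ Finset.range m, (if x (n - j) then (-1 : ℤ) else 1)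
      ≤ ∑ _j ∈ Finset.range m, (1 : ℤ) :=
        Finset.sum_le_sum fun j _ => by split <;> omega
    _ = m := by simp

lemma walk_congr {x y : ℤ → Bool} {n : ℤ} {m : ℕ}
    (h : ∀ i ∈ Finset.Icc (n - m + 1) n, x i = y i) : walk x n m = walk y n m := by
  unfold walk
  refine Finset.sum_congr rfl fun j hj => ?_
  have hj' : (j : ℤ) < m := by exact_mod_cast Finset.mem_range.1 hj
  rw [h (n - j) (by rw [Finset.mem_Icc]; omega)]

lemma measurable_walk (n : ℤ) (m : ℕ) : Measurable fun x : ℤ → Bool => walk x n m := by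
  unfold walk
  refine Finset.measurable_sum _ fun j _ => ?_
  have : Measurable fun b : Bool => (if b then (-1 : ℤ) else 1) :=
    measurable_from_top
  exact this.comp (measurable_pi_apply _)

lemma measurableSet_Mge (n q : ℤ) : MeasurableSet {x : ℤ → Bool | Mge x n q} := by
  have : {x : ℤ → Bool | Mge x n q} = ⋃ m : ℕ, {x | q ≤ walk x n m} := by
    ext x; simp [Mge]
  rw [this]
  exact MeasurableSet.iUnion fun m => measurableSet_le measurable_const (measurable_walk n m)

lemma measurable_tr (k : ℤ) : Measurable (tr k) := by
  refine measurable_pi_iff.mpr fun a => ?_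
  exact measurable_pi_apply _

lemma measurableSet_dep (i : ℤ) (b : Bool) : MeasurableSet {x : ℤ → Bool | dep x i = b} := by
  classical
  have h1 : MeasurableSet {x : ℤ → Bool | x i = true ∧ Mge x (i - 1) 1} := by
    refine MeasurableSet.inter ?_ (measurableSet_Mge _ _)
    have : MeasurableSet ((fun x : ℤ → Bool => x i) ⁻¹' {true}) :=
      measurable_pi_apply i (MeasurableSet.singleton true)
    exact this
  cases b with
  | true =>
    have : {x : ℤ → Bool | dep x i = true} = {x | x i = true ∧ Mge x (i - 1) 1} := by
      ext x; simp [dep_eq_true_iff]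
    rw [this]; exact h1
  | false =>
    have : {x : ℤ → Bool | dep x i = false} = {x | x i = true ∧ Mge x (i - 1) 1}ᶜ := by
      ext x
      simp only [mem_setOf_eq, mem_compl_iff, ← dep_eq_true_iff]
      exact ⟨fun h h' => by rw [h'] at h; exact Bool.noConfusion h,
        fun h => by cases hd : dep x i with
          | true => exact absurd hd h
          | false => rfl⟩
    rw [this]; exact h1.compl

lemma measurable_dep (i : ℤ) : Measurable fun x : ℤ → Bool => dep x i := by
  refine measurable_to_countable fun y => ?_
  have : (fun x : ℤ → Bool => dep x i) ⁻¹' {dep y i} = {x | dep x i = dep y i} := rfl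
  rw [this]
  exact measurableSet_dep i (dep y i)


/-! ### Measure lemmas -/

section Meas

variable {p : ℝ} {μ : Measure (ℤ → Bool)}

lemma cyl_measure (hμ : IsBernoulliShift p μ) (s : Finset ℤ) (f : ℤ → Bool) :
    μ (cyl s f) = ENNReal.ofReal (∏ i ∈ s, if f i then p else 1 - p) := hμ.2 s f

lemma bernoulli_unique {μ ν : Measure (ℤ → Bool)}
    (hμ : IsProbabilityMeasure μ) (hν : IsProbabilityMeasure ν)
    (h : ∀ s f, μ (cyl s f) = ν (cyl s f)) : μ = ν := by
  refine ext_of_generate_finite (CylIn univ) pi_eq_generateFrom_cylIn_univ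
    (isPiSystem_cylIn univ) ?_ ?_
  · rintro A ⟨s, _, f, rfl⟩; exact h s f
  · rw [hμ.measure_univ, hν.measure_univ]

lemma tr_preimage_cyl (k : ℤ) (s : Finset ℤ) (f : ℤ → Bool) :
    (tr k) ⁻¹' (cyl s f) = cyl (s.image (fun i => i + k)) (fun j => f (j - k)) := by
  classical
  ext x
  simp only [mem_preimage, cyl, mem_setOf_eq, Finset.mem_image, tr]
  constructor
  · rintro h j ⟨i, hi, rfl⟩
    simpa using h i hi
  · intro h i hi
    simpa using h (i + k) ⟨i, hi, rfl⟩

lemma map_tr (hμ : IsBernoulliShift p μ) (k : ℤ) : μ.map (tr k) = μ := by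
  classical
  have hprob : IsProbabilityMeasure (μ.map (tr k)) := by
    have := hμ.1
    exact Measure.isProbabilityMeasure_map (measurable_tr k).aemeasurable
  refine bernoulli_unique hprob hμ.1 fun s f => ?_
  rw [Measure.map_apply (measurable_tr k) (measurableSet_cyl s f), tr_preimage_cyl,
    cyl_measure hμ, cyl_measure hμ]
  congr 1
  rw [Finset.prod_image (by intro a _ b _ h; exact add_right_cancel h)]
  refine Finset.prod_congr rfl fun i _ => by simp

lemma tr_invariant (hμ : IsBernoulliShift p μ) (k : ℤ) {S : Set (ℤ → Bool)}
    (hS : MeasurableSet S) : μ ((tr k) ⁻¹' S) = μ S := by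
  rw [← Measure.map_apply (measurable_tr k) hS, map_tr hμ k]

/-- events depending on finitely many coordinates in `J` are in `generateFrom (CylIn J)` -/
lemma mem_G_of_depends {J : Set ℤ} (s : Finset ℤ) (hs : ↑s ⊆ J) (D : (ℤ → Bool) → Prop)
    (hD : ∀ x y : ℤ → Bool, (∀ i ∈ s, x i = y i) → D x → D y) :
    MeasurableSet[MeasurableSpace.generateFrom (CylIn J)] {x | D x} := by
  classical
  set ext0 : (↑s → Bool) → (ℤ → Bool) := fun g i => if h : i ∈ s then g ⟨i, h⟩ else false with hext
  have key : {x | D x} =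
      ⋃ g ∈ Finset.univ.filter (fun g : ↑s → Bool => D (ext0 g)), cyl s (ext0 g) := by
    ext x
    simp only [mem_setOf_eq, mem_iUnion, Finset.mem_filter, Finset.mem_univ, true_and]
    constructor
    · intro hx
      refine ⟨fun i => x i, ?_, ?_⟩
      · refine hD x _ (fun i hi => ?_) hx
        simp [hext, hi]
      · intro i hi
        simp [cyl, hext, hi]
    · rintro ⟨g, hg, hxg⟩
      refine hD (ext0 g) x (fun i hi => ?_) hg
      rw [hxg i hi]
  rw [key]
  refine MeasurableSet.biUnion (Finset.countable_toSet _) fun g _ => ?_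
  exact MeasurableSpace.measurableSet_generateFrom ⟨s, hs, ext0 g, rfl⟩

lemma mem_G_walk {n n' : ℤ} (hn : n ≤ n') (q : ℤ) (m : ℕ) :
    MeasurableSet[MeasurableSpace.generateFrom (CylIn (Iic n'))] {x | q ≤ walk x n m} := by
  refine mem_G_of_depends (Finset.Icc (n - m + 1) n) ?_ _ ?_
  · intro i hi
    simp only [Finset.coe_Icc, mem_Icc] at hi
    simp only [mem_Iic]
    omega
  · intro x y hxy hx
    rwa [← walk_congr hxy]

lemma mem_G_Mge {n n' : ℤ} (hn : n ≤ n') (q : ℤ) :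
    MeasurableSet[MeasurableSpace.generateFrom (CylIn (Iic n'))] {x | Mge x n q} := by
  have : {x : ℤ → Bool | Mge x n q} = ⋃ m : ℕ, {x | q ≤ walk x n m} := by
    ext x; simp [Mge]
  rw [this]
  exact MeasurableSet.iUnion fun m => mem_G_walk hn q m

lemma mem_G_coord {n n' : ℤ} (hn : n ≤ n') (b : Bool) :
    MeasurableSet[MeasurableSpace.generateFrom (CylIn (Iic n'))] {x | x n = b} := by
  refine mem_G_of_depends {n} (by simpa using hn) _ ?_
  intro x y hxy hx
  rw [← hxy n (Finset.mem_singleton_self n), hx]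

lemma mem_G_dep {n n' : ℤ} (hn : n ≤ n') (b : Bool) :
    MeasurableSet[MeasurableSpace.generateFrom (CylIn (Iic n'))] {x | dep x n = b} := by
  have htrue : {x : ℤ → Bool | dep x n = true} = {x | x n = true} ∩ {x | Mge x (n - 1) 1} := by
    ext x; simp only [mem_setOf_eq, mem_inter_iff, dep_eq_true_iff]
  cases b with
  | true =>
    rw [htrue]
    exact (mem_G_coord hn true).inter (mem_G_Mge (by omega) 1)
  | false =>
    have : {x : ℤ → Bool | dep x n = false} = {x : ℤ → Bool | dep x n = true}ᶜ := by
      ext x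
      simp only [mem_setOf_eq, mem_compl_iff]
      constructor
      · intro h h'; rw [h'] at h; exact Bool.noConfusion h
      · intro h
        cases hd : dep x n with
        | true => exact absurd hd h
        | false => rfl
    rw [this, htrue]
    exact ((mem_G_coord hn true).inter (mem_G_Mge (by omega) 1)).compl

/-- one-step independence: an event measurable w.r.t. coordinates `≤ b' - 1`
is independent of coordinate `b'`. -/
lemma ind_step (hμ : IsBernoulliShift p μ) (hp0 : 0 ≤ p) (hp1 : p ≤ 1) (b' : ℤ) (bit : Bool) :
    ∀ S : Set (ℤ → Bool),
      MeasurableSet[MeasurableSpace.generateFrom (CylIn (Iic (b' - 1)))] S →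
      μ (S ∩ {x | x b' = bit}) = μ S * ENNReal.ofReal (if bit then p else 1 - p) := by
  classical
  have hB : {x : ℤ → Bool | x b' = bit} = cyl {b'} (fun _ => bit) := by
    ext x; simp [cyl]
  have hBmeas : MeasurableSet {x : ℤ → Bool | x b' = bit} := by
    rw [hB]; exact measurableSet_cyl _ _
  have hμB : μ {x : ℤ → Bool | x b' = bit} = ENNReal.ofReal (if bit then p else 1 - p) := by
    rw [hB, cyl_measure hμ]; simp
  have hwnn : (0:ℝ) ≤ if bit then p else 1 - p := by split <;> linarith
  haveI : IsProbabilityMeasure μ := hμ.1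
  intro S hS
  refine MeasurableSpace.induction_on_inter
    (m := MeasurableSpace.generateFrom (CylIn (Iic (b' - 1))))
    (C := fun S _ => μ (S ∩ {x | x b' = bit})
      = μ S * ENNReal.ofReal (if bit then p else 1 - p))
    rfl (isPiSystem_cylIn _) ?_ ?_ ?_ ?_ S hS
  · simp
  · rintro A ⟨s, hs, f, rfl⟩
    have hb's : b' ∉ s := by
      intro hmem
      have := hs hmem
      simp only [mem_Iic] at this
      omega
    have hint : cyl s f ∩ {x : ℤ → Bool | x b' = bit}
        = cyl (insert b' s) (Function.update f b' bit) := by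
      ext x
      simp only [cyl, mem_inter_iff, mem_setOf_eq, Finset.mem_insert]
      constructor
      · rintro ⟨h1, h2⟩ i hi
        rcases hi with rfl | hi
        · rw [Function.update_self]; exact h2
        · rw [Function.update_of_ne (by rintro rfl; exact hb's hi)]; exact h1 i hi
      · intro h
        constructor
        · intro i hi
          have := h i (Or.inr hi)
          rwa [Function.update_of_ne (by rintro rfl; exact hb's hi)] at this
        · have := h b' (Or.inl rfl)
          rwa [Function.update_self] at this
    rw [hint, cyl_measure hμ, cyl_measure hμ, Finset.prod_insert hb's, Function.update_self,
      ENNReal.ofReal_mul hwnn, mul_comm]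
    congr 2
    refine Finset.prod_congr rfl fun i hi => ?_
    rw [Function.update_of_ne (by rintro rfl; exact hb's hi)]
  · intro t ht hC
    have htamb : MeasurableSet t := generateFrom_cylIn_le _ _ ht
    have h1 : μ (t ∩ {x | x b' = bit}) + μ (tᶜ ∩ {x | x b' = bit})
        = μ {x : ℤ → Bool | x b' = bit} := by
      have h1' := measure_inter_add_diff (μ := μ) {x : ℤ → Bool | x b' = bit} htamb
      rw [Set.inter_comm, Set.diff_eq, Set.inter_comm _ tᶜ] at h1'
      exact h1'
    have h2 : μ t * ENNReal.ofReal (if bit then p else 1 - p)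
        + μ tᶜ * ENNReal.ofReal (if bit then p else 1 - p)
        = μ {x : ℤ → Bool | x b' = bit} := by
      rw [← add_mul, measure_add_measure_compl htamb, measure_univ, one_mul, hμB]
    rw [hC] at h1
    have hfin : μ t * ENNReal.ofReal (if bit then p else 1 - p) ≠ ⊤ :=
      ENNReal.mul_ne_top (measure_ne_top μ t) ENNReal.ofReal_ne_top
    have := h1.trans h2.symm
    exact (ENNReal.add_right_inj hfin).mp this
  · intro f hdisj hmeas hC
    have hamb : ∀ i, MeasurableSet (f i) := fun i => generateFrom_cylIn_le _ _ (hmeas i)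
    have hdisj2 : Pairwise (Function.onFun Disjoint fun i => f i ∩ {x : ℤ → Bool | x b' = bit}) :=
      fun i j hij => (hdisj hij).mono inter_subset_left inter_subset_left
    rw [Set.iUnion_inter, measure_iUnion hdisj2 (fun i => (hamb i).inter hBmeas),
      measure_iUnion hdisj hamb, ← ENNReal.tsum_mul_right]
    exact tsum_congr hC


/-! ### decomposition of finite-coordinate events -/

def ext0 (s : Finset ℤ) (g : ↑s → Bool) : ℤ → Bool :=
  fun i => if h : i ∈ s then g ⟨i, h⟩ else false

lemma setOf_depends_eq (s : Finset ℤ) (D : (ℤ → Bool) → Prop)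
    [DecidablePred fun g : ↑s → Bool => D (ext0 s g)]
    (hD : ∀ x y : ℤ → Bool, (∀ i ∈ s, x i = y i) → D x → D y) :
    {x | D x} =
      ⋃ g ∈ Finset.univ.filter (fun g : ↑s → Bool => D (ext0 s g)), cyl s (ext0 s g) := by
  ext x
  simp only [mem_setOf_eq, mem_iUnion, Finset.mem_filter, Finset.mem_univ, true_and]
  constructor
  · intro hx
    refine ⟨fun i => x i, ?_, ?_⟩
    · refine hD x _ (fun i hi => ?_) hx
      simp [ext0, hi]
    · intro i hi
      simp [cyl, ext0, hi]
  · rintro ⟨g, hg, hxg⟩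
    refine hD (ext0 s g) x (fun i hi => ?_) hg
    rw [hxg i hi]

lemma measure_biUnion_cyl (hμ : IsBernoulliShift p μ) (s : Finset ℤ)
    (GG : Finset (↑s → Bool)) :
    μ (⋃ g ∈ GG, cyl s (ext0 s g)) = ∑ g ∈ GG,
      ENNReal.ofReal (∏ i ∈ s, if ext0 s g i then p else 1 - p) := by
  rw [measure_biUnion_finset ?_ (fun g _ => measurableSet_cyl _ _)]
  · exact Finset.sum_congr rfl fun g _ => cyl_measure hμ _ _
  · intro g _ g' _ hne
    simp only [Function.onFun]
    rw [Set.disjoint_left]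
    intro x hxg hxg'
    obtain ⟨i, hi⟩ := Function.ne_iff.mp hne
    have h1 := hxg i.1 i.2
    have h2 := hxg' i.1 i.2
    rw [h1] at h2
    apply hi
    simpa [ext0, i.2] using h2

/-! ### the Chernoff bound and a.s. finiteness of the queue -/

lemma pow_bound {p : ℝ} (hp2 : 1 / 2 < p) (hp1 : p < 1) {k m : ℕ} (hk : 2 * k + 1 ≤ m) :
    p ^ k * (1 - p) ^ (m - k) ≤ Real.sqrt (p * (1 - p)) ^ m := by
  have hp0 : 0 < p := by linarith
  have h1p : 0 ≤ 1 - p := by linarith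
  have hnn : 0 ≤ p * (1 - p) := by positivity
  obtain ⟨r, hr⟩ : ∃ r, m = 2 * k + 1 + r := ⟨m - (2 * k + 1), by omega⟩
  subst hr
  have hmk : 2 * k + 1 + r - k = k + (1 + r) := by omega
  rw [hmk]
  have hsq : Real.sqrt (p * (1 - p)) ^ (2 * k + 1 + r)
      = (p * (1 - p)) ^ k * Real.sqrt (p * (1 - p)) ^ (1 + r) := by
    have : 2 * k + 1 + r = 2 * k + (1 + r) := by omega
    rw [this, pow_add, pow_mul, Real.sq_sqrt hnn]
  rw [hsq, pow_add, ← mul_assoc, (mul_pow p (1 - p) k).symm.trans rfl]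
  refine mul_le_mul_of_nonneg_left ?_ (by positivity)
  refine pow_le_pow_left₀ h1p ?_ _
  refine (Real.le_sqrt h1p hnn).mpr ?_
  nlinarith

lemma chernoff (hμ : IsBernoulliShift p μ) (hp2 : 1 / 2 < p) (hp1 : p < 1) (m : ℕ) :
    μ {x | 1 ≤ walk x 0 m} ≤ ENNReal.ofReal ((2 * Real.sqrt (p * (1 - p))) ^ m) := by
  classical
  have hp0 : 0 < p := by linarith
  have h1p : 0 ≤ 1 - p := by linarith
  set s : Finset ℤ := (Finset.range m).image (fun j : ℕ => -(j : ℤ)) with hs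
  have hneg_inj : Function.Injective (fun j : ℕ => -(j : ℤ)) := by
    intro a b h; simpa using h
  have hcards : s.card = m := by
    rw [hs, Finset.card_image_of_injective _ hneg_inj, Finset.card_range]
  have hmem : ∀ j ∈ Finset.range m, (0 : ℤ) - (j : ℕ) ∈ s := by
    intro j hj
    rw [hs, Finset.mem_image]
    exact ⟨j, hj, by omega⟩
  have hwalk_sum : ∀ x : ℤ → Bool, walk x 0 m = ∑ i ∈ s, (if x i then (-1 : ℤ) else 1) := by
    intro x
    rw [hs, Finset.sum_image (fun a _ b _ h => hneg_inj h)]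
    refine Finset.sum_congr rfl fun j _ => ?_
    norm_num
  have hD : ∀ x y : ℤ → Bool, (∀ i ∈ s, x i = y i) → 1 ≤ walk x 0 m → 1 ≤ walk y 0 m := by
    intro x y hxy h
    rw [hwalk_sum] at h ⊢
    rwa [Finset.sum_congr rfl fun i hi => by rw [hxy i hi]] at h
  rw [setOf_depends_eq s _ hD, measure_biUnion_cyl hμ]
  set sq := Real.sqrt (p * (1 - p)) with hsqdef
  have hsq0 : 0 ≤ sq := Real.sqrt_nonneg _
  have hterm : ∀ g ∈ Finset.univ.filter (fun g : ↑s → Bool => 1 ≤ walk (ext0 s g) 0 m),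
      ENNReal.ofReal (∏ i ∈ s, if ext0 s g i then p else 1 - p) ≤ ENNReal.ofReal (sq ^ m) := by
    intro g hg
    rw [Finset.mem_filter] at hg
    refine ENNReal.ofReal_le_ofReal ?_
    set kk := (s.filter (fun i => ext0 s g i = true)).card with hkk
    have hprod : (∏ i ∈ s, if ext0 s g i then p else 1 - p) = p ^ kk * (1 - p) ^ (s.card - kk) := by
      rw [← Finset.prod_filter_mul_prod_filter_not s (fun i => ext0 s g i = true)]
      congr 1
      · rw [Finset.prod_congr rfl (fun i hi => if_pos (Finset.mem_filter.mp hi).2),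
          Finset.prod_const, hkk]
      · rw [Finset.prod_congr rfl (g := fun _ => 1 - p)
          (fun i hi => by
            have := (Finset.mem_filter.mp hi).2
            simp only [Bool.not_eq_true] at this
            rw [if_neg (by simp [this])]),
          Finset.prod_const]
        congr 1
        have := Finset.card_filter_add_card_filter_not
          (s := s) (fun i => ext0 s g i = true)
        omega
    have hwalkval : walk (ext0 s g) 0 m = (↑(s.card - kk) : ℤ) - kk := by
      rw [hwalk_sum, ← Finset.sum_filter_add_sum_filter_not s (fun i => ext0 s g i = true)]
      have e1 : ∑ i ∈ s.filter (fun i => ext0 s g i = true), (if ext0 s g i then (-1 : ℤ) else 1)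
          = -(kk : ℤ) := by
        rw [Finset.sum_congr rfl (g := fun _ => (-1 : ℤ))
          (fun i hi => if_pos (Finset.mem_filter.mp hi).2), Finset.sum_const, hkk]
        simp
      have e2 : ∑ i ∈ s.filter (fun i => ¬ext0 s g i = true), (if ext0 s g i then (-1 : ℤ) else 1)
          = ((s.card - kk : ℕ) : ℤ) := by
        rw [Finset.sum_congr rfl (g := fun _ => (1 : ℤ))
          (fun i hi => by
            have := (Finset.mem_filter.mp hi).2
            rw [if_neg this]), Finset.sum_const]
        have := Finset.card_filter_add_card_filter_not
          (s := s) (fun i => ext0 s g i = true)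
        simp only [nsmul_eq_mul, mul_one]
        congr 1
        omega
      rw [e1, e2]; ring
    have hkkm : kk ≤ m := by
      rw [← hcards]
      exact Finset.card_filter_le _ _
    have hineq : 2 * kk + 1 ≤ m := by
      have h1 := hg.2
      rw [hwalkval] at h1
      have : ((s.card - kk : ℕ) : ℤ) = (m : ℤ) - kk := by
        rw [hcards] at *
        omega
      omega
    rw [hprod, hcards]
    exact pow_bound hp2 hp1 hineq
  calc ∑ g ∈ Finset.univ.filter (fun g : ↑s → Bool => 1 ≤ walk (ext0 s g) 0 m),
        ENNReal.ofReal (∏ i ∈ s, if ext0 s g i then p else 1 - p)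
      ≤ ∑ g ∈ Finset.univ.filter (fun g : ↑s → Bool => 1 ≤ walk (ext0 s g) 0 m),
        ENNReal.ofReal (sq ^ m) := Finset.sum_le_sum hterm
    _ = (Finset.univ.filter (fun g : ↑s → Bool => 1 ≤ walk (ext0 s g) 0 m)).card
        * ENNReal.ofReal (sq ^ m) := by rw [Finset.sum_const, nsmul_eq_mul]
    _ ≤ (2 ^ m : ℕ) * ENNReal.ofReal (sq ^ m) := by
        refine mul_le_mul_left ?_ _
        have h1 : (Finset.univ.filter (fun g : ↑s → Bool => 1 ≤ walk (ext0 s g) 0 m)).card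
            ≤ (Finset.univ : Finset (↑s → Bool)).card := Finset.card_filter_le _ _
        have h2 : (Finset.univ : Finset (↑s → Bool)).card = 2 ^ m := by
          rw [Finset.card_univ, Fintype.card_fun]
          simp [hcards]
        exact_mod_cast h1.trans_eq h2
    _ = ENNReal.ofReal ((2 * sq) ^ m) := by
        rw [mul_pow, ENNReal.ofReal_mul (by positivity)]
        congr 1
        rw [← ENNReal.ofReal_natCast]
        congr 1
        push_cast
        ring

lemma inf_null (hμ : IsBernoulliShift p μ) (hp2 : 1 / 2 < p) (hp1 : p < 1) :
    μ (⋂ q : ℕ, {x | Mge x 0 (q : ℤ)}) = 0 := by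
  have hp0 : 0 < p := by linarith
  have h1p : 0 ≤ 1 - p := by linarith
  set c := 2 * Real.sqrt (p * (1 - p)) with hc
  have hc0 : 0 ≤ c := by positivity
  have hc1 : c < 1 := by
    rw [hc]
    have : Real.sqrt (p * (1 - p)) < 1 / 2 := by
      rw [Real.sqrt_lt' (by norm_num)]
      nlinarith
    linarith
  have hsub : (⋂ q : ℕ, {x : ℤ → Bool | Mge x 0 (q : ℤ)})
      ⊆ Filter.limsup (fun m => {x : ℤ → Bool | 1 ≤ walk x 0 m}) Filter.atTop := by
    intro x hx
    rw [Filter.mem_limsup_iff_frequently_mem, Filter.frequently_atTop]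
    intro M
    have hxM : Mge x 0 ((M : ℤ) + 1) := by
      have := mem_iInter.mp hx (M + 1)
      simpa using this
    obtain ⟨m, hm⟩ := hxM
    refine ⟨m, ?_, ?_⟩
    · have := walk_le x 0 m
      omega
    · simp only [mem_setOf_eq]
      omega
  refine measure_mono_null hsub ?_
  refine measure_limsup_atTop_eq_zero ?_
  have hbound : ∑' m : ℕ, μ {x : ℤ → Bool | 1 ≤ walk x 0 m}
      ≤ ∑' m : ℕ, ENNReal.ofReal (c ^ m) :=
    ENNReal.tsum_le_tsum fun m => chernoff hμ hp2 hp1 m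
  refine ne_top_of_le_ne_top ?_ hbound
  rw [← ENNReal.ofReal_tsum_of_nonneg (fun m => by positivity)
    (summable_geometric_of_lt_one hc0 hc1)]
  exact ENNReal.ofReal_ne_top


/-! ### the queue-length law is geometric -/

def Qeq (n : ℤ) (q : ℕ) : Set (ℤ → Bool) :=
  {x | Mge x n (q : ℤ) ∧ ¬ Mge x n ((q : ℤ) + 1)}

lemma measurableSet_Qeq (n : ℤ) (q : ℕ) : MeasurableSet (Qeq n q) :=
  (measurableSet_Mge n q).inter (measurableSet_Mge n ((q : ℤ) + 1)).compl

lemma mem_G_Qeq {n n' : ℤ} (hn : n ≤ n') (q : ℕ) :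
    MeasurableSet[MeasurableSpace.generateFrom (CylIn (Iic n'))] (Qeq n q) :=
  (mem_G_Mge hn q).inter (mem_G_Mge hn ((q : ℤ) + 1)).compl

lemma Qeq_disjoint (n : ℤ) : Pairwise (Function.onFun Disjoint fun q : ℕ => Qeq n q) := by
  have key : ∀ q q' : ℕ, q < q' → Disjoint (Qeq n q) (Qeq n q') := by
    intro q q' h
    rw [Set.disjoint_left]
    rintro x ⟨_, hx2⟩ ⟨hx1', _⟩
    exact hx2 (Mge_anti (by omega) hx1')
  intro q q' hqq'
  rcases lt_or_gt_of_ne hqq' with h | h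
  · exact key _ _ h
  · exact (key _ _ h).symm

lemma tr_preimage_Qeq (n : ℤ) (q : ℕ) : (tr n) ⁻¹' (Qeq 0 q) = Qeq n q := by
  ext x
  simp only [Qeq, mem_preimage, mem_setOf_eq, Mge_tr, zero_add]

lemma iUnion_Qeq (n : ℤ) :
    (⋃ q : ℕ, Qeq n q) = (⋂ q : ℕ, {x | Mge x n (q : ℤ)})ᶜ := by
  classical
  ext x
  simp only [mem_iUnion, mem_compl_iff, mem_iInter, mem_setOf_eq, not_forall, Qeq]
  constructor
  · rintro ⟨q, _, hq2⟩
    exact ⟨q + 1, by push_cast; exact hq2⟩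
  · rintro ⟨q, hq⟩
    have hex : ∃ k : ℕ, ¬ Mge x n (k : ℤ) := ⟨q, hq⟩
    let k0 := Nat.find hex
    have hk0 : ¬ Mge x n (k0 : ℤ) := Nat.find_spec hex
    have hk0pos : 0 < k0 := by
      rcases Nat.eq_zero_or_pos k0 with h | h
      · exfalso; apply hk0; rw [h]; exact Mge_of_nonpos (by norm_num)
      · exact h
    refine ⟨k0 - 1, ?_, ?_⟩
    · by_contra hcon
      have := Nat.find_min hex (m := k0 - 1) (by omega)
      exact this hcon
    · have : ((k0 - 1 : ℕ) : ℤ) + 1 = (k0 : ℤ) := by omega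
      rw [this]
      exact hk0

lemma Mge_rec_false' {x : ℤ → Bool} {n q : ℤ} (hq : 0 ≤ q) (hx : x n = false) :
    Mge x n (q + 1) ↔ Mge x (n - 1) q := by
  rw [Mge_rec_false (by omega) hx]
  norm_num

section Geom

variable {p : ℝ} {μ : Measure (ℤ → Bool)}

lemma measure_iUnion_Qeq_eq_one (hμ : IsBernoulliShift p μ) (hp2 : 1 / 2 < p) (hp1 : p < 1) :
    μ (⋃ q : ℕ, Qeq 0 q) = 1 := by
  haveI : IsProbabilityMeasure μ := hμ.1
  rw [iUnion_Qeq]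
  have hmc := measure_compl (μ := μ) (s := ⋂ q : ℕ, {x : ℤ → Bool | Mge x 0 (q : ℤ)})
    (MeasurableSet.iInter fun q => measurableSet_Mge 0 (q : ℤ)) (measure_ne_top μ _)
  rw [hmc, inf_null hμ hp2 hp1, measure_univ, tsub_zero]

/-- the per-step set identities, at the right endpoint `b` -/
lemma dep_true_Qeq (b : ℤ) (q : ℕ) :
    {x | dep x b = true} ∩ Qeq b q = Qeq (b - 1) (q + 1) ∩ {x | x b = true} := by
  ext x
  simp only [Qeq, mem_inter_iff, mem_setOf_eq, dep_eq_true_iff]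
  push_cast
  constructor
  · rintro ⟨⟨hxb, hM1⟩, hMq, hMq1⟩
    refine ⟨⟨?_, fun hcon => hMq1 ((Mge_rec_true (by omega) hxb).mpr hcon)⟩, hxb⟩
    rcases Nat.eq_zero_or_pos q with h | h
    · subst h; simpa using hM1
    · exact (Mge_rec_true (by omega) hxb).mp hMq
  · rintro ⟨⟨hMq1, hMq2⟩, hxb⟩
    have hM1 : Mge x (b - 1) 1 := Mge_anti (by omega) hMq1
    refine ⟨⟨hxb, hM1⟩, ?_, fun hcon => hMq2 ((Mge_rec_true (by omega) hxb).mp hcon)⟩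
    rcases Nat.eq_zero_or_pos q with h | h
    · subst h; exact Mge_of_nonpos (by norm_num)
    · exact (Mge_rec_true (by omega) hxb).mpr hMq1

lemma dep_false_Qeq_zero (b : ℤ) :
    {x | dep x b = false} ∩ Qeq b 0 = Qeq (b - 1) 0 ∩ {x | x b = true} := by
  ext x
  simp only [Qeq, mem_inter_iff, mem_setOf_eq]
  push_cast
  constructor
  · rintro ⟨hdep, hM0, hM1⟩
    have hdep' : ¬ (x b = true ∧ Mge x (b - 1) 1) := by
      intro hcon
      rw [dep_eq_true_iff.mpr hcon] at hdep
      exact Bool.noConfusion hdep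
    cases hxb : x b with
    | false =>
      exfalso
      apply hM1
      have := (Mge_rec_false' (by norm_num) hxb).mpr (Mge_of_nonpos (le_refl 0))
      simpa using this
    | true =>
      have hnM : ¬ Mge x (b - 1) 1 := fun h => hdep' ⟨hxb, h⟩
      exact ⟨⟨Mge_of_nonpos (by norm_num), by simpa using hnM⟩, rfl⟩
  · rintro ⟨⟨_, hnM1⟩, hxb⟩
    have hnM1' : ¬ Mge x (b - 1) 1 := by simpa using hnM1
    refine ⟨?_, Mge_of_nonpos (by norm_num), ?_⟩
    · cases hd : dep x b with
      | false => rfl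
      | true => exact absurd (dep_eq_true_iff.mp hd).2 hnM1'
    · intro hcon
      have h2 : Mge x (b - 1) (1 + 1) := (Mge_rec_true (q := 1) (le_refl 1) hxb).mp hcon
      exact hnM1' (Mge_anti (by norm_num) h2)

lemma dep_false_Qeq_succ (b : ℤ) (s : ℕ) :
    {x | dep x b = false} ∩ Qeq b (s + 1) = Qeq (b - 1) s ∩ {x | x b = false} := by
  ext x
  simp only [Qeq, mem_inter_iff, mem_setOf_eq]
  push_cast
  constructor
  · rintro ⟨hdep, hMs1, hMs2⟩
    have hdep' : ¬ (x b = true ∧ Mge x (b - 1) 1) := by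
      intro hcon
      rw [dep_eq_true_iff.mpr hcon] at hdep
      exact Bool.noConfusion hdep
    cases hxb : x b with
    | true =>
      exfalso
      have hnM : ¬ Mge x (b - 1) 1 := fun h => hdep' ⟨hxb, h⟩
      have := (Mge_rec_true (by omega) hxb).mp hMs1
      exact hnM (Mge_anti (by omega) this)
    | false =>
      refine ⟨⟨(Mge_rec_false' (by omega) hxb).mp hMs1,
        fun hcon => hMs2 ((Mge_rec_false' (by omega) hxb).mpr hcon)⟩, rfl⟩
  · rintro ⟨⟨hMs, hMs1⟩, hxb⟩
    have hdep : dep x b = false := by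
      cases hd : dep x b with
      | false => rfl
      | true =>
        have := (dep_eq_true_iff.mp hd).1
        rw [hxb] at this
        exact Bool.noConfusion this
    exact ⟨hdep, (Mge_rec_false' (by omega) hxb).mpr hMs,
      fun hcon => hMs1 ((Mge_rec_false' (by omega) hxb).mp hcon)⟩


lemma Qeq_split (b : ℤ) (q : ℕ) :
    Qeq b q = ({x | dep x b = true} ∩ Qeq b q) ∪ ({x | dep x b = false} ∩ Qeq b q) := by
  ext x
  simp only [mem_union, mem_inter_iff, mem_setOf_eq]
  cases hd : dep x b with
  | true => tauto
  | false => tauto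

lemma Qeq_step_zero (b : ℤ) :
    Qeq b 0 = (Qeq (b - 1) 1 ∩ {x | x b = true}) ∪ (Qeq (b - 1) 0 ∩ {x | x b = true}) := by
  rw [Qeq_split b 0, dep_true_Qeq, dep_false_Qeq_zero]

lemma Qeq_step_succ (b : ℤ) (s : ℕ) :
    Qeq b (s + 1)
      = (Qeq (b - 1) (s + 1 + 1) ∩ {x | x b = true}) ∪ (Qeq (b - 1) s ∩ {x | x b = false}) := by
  rw [Qeq_split b (s + 1), dep_true_Qeq, dep_false_Qeq_succ]

lemma geom_law (hμ : IsBernoulliShift p μ) (hp2 : 1 / 2 < p) (hp1 : p < 1) (q : ℕ) :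
    μ (Qeq 0 q)
      = ENNReal.ofReal ((1 - (1 - p) / p) * ((1 - p) / p) ^ q) := by
  classical
  haveI : IsProbabilityMeasure μ := hμ.1
  have hp0 : 0 < p := by linarith
  set ρ : ℝ := (1 - p) / p with hρ
  have hρ0 : 0 ≤ ρ := div_nonneg (by linarith) hp0.le
  have hρ1 : ρ < 1 := by
    rw [hρ, div_lt_one hp0]
    linarith
  have hfin : ∀ k : ℕ, μ (Qeq 0 k) ≠ ⊤ := fun k => measure_ne_top μ _
  set l : ℕ → ℝ := fun k => (μ (Qeq 0 k)).toReal with hl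
  have hlnn : ∀ k, 0 ≤ l k := fun k => ENNReal.toReal_nonneg
  have hofl : ∀ k, μ (Qeq 0 k) = ENNReal.ofReal (l k) :=
    fun k => (ENNReal.ofReal_toReal (hfin k)).symm
  -- stationarity
  have hstat : ∀ k : ℕ, μ (Qeq 1 k) = μ (Qeq 0 k) := by
    intro k
    rw [← tr_preimage_Qeq 1 k, tr_invariant hμ 1 (measurableSet_Qeq 0 k)]
  -- independence
  have hind : ∀ (k : ℕ) (bit : Bool),
      μ (Qeq 0 k ∩ {x | x 1 = bit})
        = μ (Qeq 0 k) * ENNReal.ofReal (if bit then p else 1 - p) := by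
    intro k bit
    refine ind_step hμ hp0.le hp1.le 1 bit _ ?_
    exact mem_G_Qeq (by norm_num) k
  have hone : (1 : ℤ) - 1 = 0 := by norm_num
  -- step equations (measure-valued)
  have heq0 : μ (Qeq 0 0) = μ (Qeq 0 1) * ENNReal.ofReal p + μ (Qeq 0 0) * ENNReal.ofReal p := by
    have h1 := hstat 0
    rw [Qeq_step_zero 1, hone] at h1
    have h2 : μ (Qeq 0 1 ∩ {x | x 1 = true} ∪ Qeq 0 0 ∩ {x | x 1 = true})
        = μ (Qeq 0 1) * ENNReal.ofReal p + μ (Qeq 0 0) * ENNReal.ofReal p := by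
      have hdisj : Disjoint (Qeq 0 1 ∩ {x : ℤ → Bool | x 1 = true})
          (Qeq 0 0 ∩ {x : ℤ → Bool | x 1 = true}) :=
        (Qeq_disjoint 0 (by norm_num : (1:ℕ) ≠ 0)).mono inter_subset_left inter_subset_left
      rw [measure_union hdisj
        ((measurableSet_Qeq 0 0).inter
          ((measurable_pi_apply 1) (MeasurableSet.singleton true) :
            MeasurableSet ((fun x : ℤ → Bool => x 1) ⁻¹' {true}))),
        hind 1 true, hind 0 true]
      simp
    exact h1.symm.trans h2
  have heqs : ∀ s : ℕ, μ (Qeq 0 (s + 1))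
      = μ (Qeq 0 (s + 1 + 1)) * ENNReal.ofReal p
        + μ (Qeq 0 s) * ENNReal.ofReal (1 - p) := by
    intro s
    have h1 := hstat (s + 1)
    rw [Qeq_step_succ 1 s, hone] at h1
    have h2 : μ (Qeq 0 (s + 1 + 1) ∩ {x | x 1 = true} ∪ Qeq 0 s ∩ {x | x 1 = false})
        = μ (Qeq 0 (s + 1 + 1)) * ENNReal.ofReal p
          + μ (Qeq 0 s) * ENNReal.ofReal (1 - p) := by
      have hdisj : Disjoint (Qeq 0 (s + 1 + 1) ∩ {x : ℤ → Bool | x 1 = true})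
          (Qeq 0 s ∩ {x : ℤ → Bool | x 1 = false}) :=
        (Qeq_disjoint 0 (by omega : s + 1 + 1 ≠ s)).mono inter_subset_left inter_subset_left
      rw [measure_union hdisj
        ((measurableSet_Qeq 0 s).inter
          ((measurable_pi_apply 1) (MeasurableSet.singleton false) :
            MeasurableSet ((fun x : ℤ → Bool => x 1) ⁻¹' {false}))),
        hind (s + 1 + 1) true, hind s false]
      simp
    exact h1.symm.trans h2
  -- real-valued equations
  have hreal0 : l 0 = l 1 * p + l 0 * p := by
    have := congrArg ENNReal.toReal heq0
    rwa [ENNReal.toReal_add (by finiteness) (by finiteness), ENNReal.toReal_mul,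
      ENNReal.toReal_mul, ENNReal.toReal_ofReal hp0.le] at this
  have hreals : ∀ s : ℕ, l (s + 1) = l (s + 1 + 1) * p + l s * (1 - p) := by
    intro s
    have := congrArg ENNReal.toReal (heqs s)
    rwa [ENNReal.toReal_add (by finiteness) (by finiteness), ENNReal.toReal_mul,
      ENNReal.toReal_mul, ENNReal.toReal_ofReal hp0.le,
      ENNReal.toReal_ofReal (by linarith)] at this
  -- cut equations
  have hcut : ∀ k : ℕ, (1 - p) * l k = p * l (k + 1) := by
    intro k
    induction k with
    | zero => linarith [hreal0]
    | succ s ih => linarith [hreals s]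
  -- geometric solution
  have hgeo : ∀ k : ℕ, l k = l 0 * ρ ^ k := by
    intro k
    induction k with
    | zero => simp
    | succ s ih =>
      have := hcut s
      have hps : l (s + 1) = ρ * l s := by
        rw [hρ]
        field_simp
        linarith
      rw [hps, ih, pow_succ]
      ring
  -- total mass one
  have hsum : ∑' k : ℕ, μ (Qeq 0 k) = 1 := by
    rw [← measure_iUnion (Qeq_disjoint 0) (fun k => measurableSet_Qeq 0 k)]
    exact measure_iUnion_Qeq_eq_one hμ hp2 hp1
  have hsuml : ∑' k : ℕ, l k = 1 := by
    have := ENNReal.tsum_toReal_eq hfin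
    rw [hsum] at this
    simpa using this.symm
  have hsumgeo : ∑' k : ℕ, l 0 * ρ ^ k = l 0 * (1 - ρ)⁻¹ := by
    rw [tsum_mul_left, tsum_geometric_of_lt_one hρ0 hρ1]
  have hl0 : l 0 = 1 - ρ := by
    have h1 : ∑' k : ℕ, l k = l 0 * (1 - ρ)⁻¹ := by
      rw [tsum_congr hgeo, hsumgeo]
    rw [hsuml] at h1
    have hρne : 1 - ρ ≠ 0 := by linarith
    field_simp at h1
    linarith
  rw [hofl q, hgeo q, hl0]


lemma main_induction (hμ : IsBernoulliShift p μ) (hp2 : 1 / 2 < p) (hp1 : p < 1) :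
    ∀ (n : ℕ) (f : ℤ → Bool) (q : ℕ),
      μ ({x | ∀ i ∈ Finset.Icc (1:ℤ) (n:ℤ), dep x i = f i} ∩ Qeq (n:ℤ) q)
        = (∏ i ∈ Finset.Icc (1:ℤ) (n:ℤ), ENNReal.ofReal (if f i then 1 - p else p))
          * ENNReal.ofReal ((1 - (1 - p) / p) * ((1 - p) / p) ^ q) := by
  have hp0 : 0 < p := by linarith
  intro n
  induction n with
  | zero =>
    intro f q
    have he : Finset.Icc (1:ℤ) ((0:ℕ):ℤ) = ∅ := by
      refine Finset.Icc_eq_empty ?_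
      norm_num
    rw [he]
    have huniv : {x : ℤ → Bool | ∀ i ∈ (∅ : Finset ℤ), dep x i = f i} = univ := by
      ext x; simp
    rw [huniv, univ_inter, Finset.prod_empty, one_mul]
    have h0 : ((0:ℕ):ℤ) = 0 := by norm_num
    rw [h0]
    exact geom_law hμ hp2 hp1 q
  | succ n IH =>
    intro f q
    have hb : ((n:ℤ) + 1) - 1 = (n:ℤ) := by ring
    have hcast : ((n + 1 : ℕ) : ℤ) = (n:ℤ) + 1 := by push_cast; ring
    have hicc : Finset.Icc (1:ℤ) ((n:ℤ) + 1) = insert ((n:ℤ) + 1) (Finset.Icc (1:ℤ) (n:ℤ)) := by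
      ext i
      simp only [Finset.mem_Icc, Finset.mem_insert]
      omega
    have hnotmem : ((n:ℤ) + 1) ∉ Finset.Icc (1:ℤ) (n:ℤ) := by
      simp only [Finset.mem_Icc]
      omega
    have hEv : {x : ℤ → Bool | ∀ i ∈ Finset.Icc (1:ℤ) ((n:ℤ) + 1), dep x i = f i}
        = {x | ∀ i ∈ Finset.Icc (1:ℤ) (n:ℤ), dep x i = f i}
          ∩ {x | dep x ((n:ℤ) + 1) = f ((n:ℤ) + 1)} := by
      ext x
      simp only [mem_setOf_eq, mem_inter_iff, Finset.mem_Icc]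
      constructor
      · intro h
        exact ⟨fun i hi => h i ⟨hi.1, by omega⟩, h _ ⟨by omega, le_refl _⟩⟩
      · rintro ⟨h1, h2⟩ i hi
        rcases eq_or_lt_of_le hi.2 with heq | hlt
        · rw [heq]; exact h2
        · exact h1 i ⟨hi.1, by omega⟩
    set En := {x : ℤ → Bool | ∀ i ∈ Finset.Icc (1:ℤ) (n:ℤ), dep x i = f i} with hEn
    have hGEn : ∀ k : ℕ,
        MeasurableSet[MeasurableSpace.generateFrom (CylIn (Iic (n:ℤ)))]
          (En ∩ Qeq (n:ℤ) k) := by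
      intro k
      refine MeasurableSet.inter ?_ (mem_G_Qeq le_rfl k)
      have hEn2 : En = ⋂ i ∈ Finset.Icc (1:ℤ) (n:ℤ), {x | dep x i = f i} := by
        ext x; simp [hEn]
      rw [hEn2]
      refine Set.Finite.measurableSet_biInter (Finset.finite_toSet _) fun i hi => ?_
      have h2 : i ∈ Finset.Icc (1:ℤ) (n:ℤ) := Finset.mem_coe.mp hi
      rw [Finset.mem_Icc] at h2
      exact mem_G_dep h2.2 (f i)
    have hindc : ∀ (k : ℕ) (bit : Bool),
        μ ((En ∩ Qeq (n:ℤ) k) ∩ {x | x ((n:ℤ) + 1) = bit})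
          = μ (En ∩ Qeq (n:ℤ) k) * ENNReal.ofReal (if bit then p else 1 - p) := by
      intro k bit
      refine ind_step hμ hp0.le hp1.le ((n:ℤ) + 1) bit _ ?_
      rw [show ((n:ℤ) + 1) - 1 = (n:ℤ) from by ring]
      exact hGEn k
    -- rewrite the goal
    rw [hcast, hEv, hicc, Finset.prod_insert hnotmem]
    have hassoc : ∀ (A B C : Set (ℤ → Bool)), (A ∩ B) ∩ C = A ∩ (B ∩ C) := fun A B C =>
      Set.inter_assoc A B C
    rw [hassoc]
    have hπnn : ∀ k : ℕ, 0 ≤ (1 - (1 - p) / p) * ((1 - p) / p) ^ k := by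
      intro k
      refine mul_nonneg ?_ (pow_nonneg (div_nonneg (by linarith) hp0.le) k)
      rw [sub_nonneg, div_le_one hp0]
      linarith
    cases hfb : f ((n:ℤ) + 1) with
    | true =>
      have hset : {x : ℤ → Bool | dep x ((n:ℤ) + 1) = true} ∩ Qeq ((n:ℤ) + 1) q
          = Qeq (n:ℤ) (q + 1) ∩ {x | x ((n:ℤ) + 1) = true} := by
        have := dep_true_Qeq ((n:ℤ) + 1) q
        rwa [hb] at this
      rw [hset, ← hassoc, hindc (q + 1) true, IH f (q + 1)]
      norm_num
      have harith : ENNReal.ofReal ((1 - (1 - p) / p) * ((1 - p) / p) ^ (q + 1))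
          * ENNReal.ofReal p
          = ENNReal.ofReal (1 - p) * ENNReal.ofReal ((1 - (1 - p) / p) * ((1 - p) / p) ^ q) := by
        rw [← ENNReal.ofReal_mul (hπnn (q + 1)), ← ENNReal.ofReal_mul (by linarith : (0:ℝ) ≤ 1 - p)]
        congr 1
        linear_combination ((1 - (1 - p) / p) * ((1 - p) / p) ^ q) * (div_mul_cancel₀ (1 - p) hp0.ne')
      rw [mul_assoc, harith]
      try ring
    | false =>
      cases q with
      | zero =>
        have hset : {x : ℤ → Bool | dep x ((n:ℤ) + 1) = false} ∩ Qeq ((n:ℤ) + 1) 0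
            = Qeq (n:ℤ) 0 ∩ {x | x ((n:ℤ) + 1) = true} := by
          have := dep_false_Qeq_zero ((n:ℤ) + 1)
          rwa [hb] at this
        rw [hset, ← hassoc, hindc 0 true, IH f 0]
        norm_num
        try ring
      | succ s =>
        have hset : {x : ℤ → Bool | dep x ((n:ℤ) + 1) = false} ∩ Qeq ((n:ℤ) + 1) (s + 1)
            = Qeq (n:ℤ) s ∩ {x | x ((n:ℤ) + 1) = false} := by
          have := dep_false_Qeq_succ ((n:ℤ) + 1) s
          rwa [hb] at this
        rw [hset, ← hassoc, hindc s false, IH f s]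
        norm_num
        have harith : ENNReal.ofReal ((1 - (1 - p) / p) * ((1 - p) / p) ^ s)
            * ENNReal.ofReal (1 - p)
            = ENNReal.ofReal p * ENNReal.ofReal ((1 - (1 - p) / p) * ((1 - p) / p) ^ (s + 1)) := by
          rw [← ENNReal.ofReal_mul (hπnn s), ← ENNReal.ofReal_mul hp0.le]
          congr 1
          linear_combination (-((1 - (1 - p) / p) * ((1 - p) / p) ^ s)) * (div_mul_cancel₀ (1 - p) hp0.ne')
        rw [mul_assoc, harith]
        try ring


lemma tsum_pi_one (hμ : IsBernoulliShift p μ) (hp2 : 1 / 2 < p) (hp1 : p < 1) :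
    ∑' q : ℕ, ENNReal.ofReal ((1 - (1 - p) / p) * ((1 - p) / p) ^ q) = 1 := by
  have h1 : ∀ q : ℕ, ENNReal.ofReal ((1 - (1 - p) / p) * ((1 - p) / p) ^ q) = μ (Qeq 0 q) :=
    fun q => (geom_law hμ hp2 hp1 q).symm
  rw [tsum_congr h1, ← measure_iUnion (Qeq_disjoint 0) (fun k => measurableSet_Qeq 0 k)]
  exact measure_iUnion_Qeq_eq_one hμ hp2 hp1

lemma window_law (hμ : IsBernoulliShift p μ) (hp2 : 1 / 2 < p) (hp1 : p < 1)
    (n : ℕ) (f : ℤ → Bool) :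
    μ {x | ∀ i ∈ Finset.Icc (1:ℤ) (n:ℤ), dep x i = f i}
      = ∏ i ∈ Finset.Icc (1:ℤ) (n:ℤ), ENNReal.ofReal (if f i then 1 - p else p) := by
  set E := {x : ℤ → Bool | ∀ i ∈ Finset.Icc (1:ℤ) (n:ℤ), dep x i = f i} with hE
  have hEmeas : MeasurableSet E := by
    have : E = ⋂ i ∈ Finset.Icc (1:ℤ) (n:ℤ), {x | dep x i = f i} := by
      ext x; simp [hE]
    rw [this]
    exact Set.Finite.measurableSet_biInter (Finset.finite_toSet _)
      fun i _ => measurableSet_dep i (f i)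
  set U := ⋃ q : ℕ, Qeq (n:ℤ) q with hU
  have hUmeas : MeasurableSet U := MeasurableSet.iUnion fun q => measurableSet_Qeq _ q
  have hsplit := measure_inter_add_diff (μ := μ) E hUmeas
  have hnull : μ (E \ U) = 0 := by
    refine measure_mono_null (t := Uᶜ) (fun x hx => hx.2) ?_
    · show μ Uᶜ = 0
      rw [hU, iUnion_Qeq, compl_compl]
      have hpre : (⋂ q : ℕ, {x : ℤ → Bool | Mge x (n:ℤ) (q:ℤ)})
          = (tr (n:ℤ)) ⁻¹' (⋂ q : ℕ, {x : ℤ → Bool | Mge x 0 (q:ℤ)}) := by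
        ext x
        simp only [mem_iInter, mem_preimage, mem_setOf_eq, Mge_tr, zero_add]
      rw [hpre, tr_invariant hμ (n:ℤ)
        (MeasurableSet.iInter fun q : ℕ => measurableSet_Mge 0 (q:ℤ))]
      exact inf_null hμ hp2 hp1
  have hinter : μ (E ∩ U) = ∑' q : ℕ, μ (E ∩ Qeq (n:ℤ) q) := by
    rw [hU, Set.inter_iUnion]
    exact measure_iUnion
      (fun i j hij => ((Qeq_disjoint (n:ℤ) hij).mono inter_subset_right inter_subset_right))
      (fun q => hEmeas.inter (measurableSet_Qeq _ q))
  have hmain : ∀ q : ℕ, μ (E ∩ Qeq (n:ℤ) q)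
      = (∏ i ∈ Finset.Icc (1:ℤ) (n:ℤ), ENNReal.ofReal (if f i then 1 - p else p))
        * ENNReal.ofReal ((1 - (1 - p) / p) * ((1 - p) / p) ^ q) :=
    fun q => main_induction hμ hp2 hp1 n f q
  have : μ E = μ (E ∩ U) := by
    rw [← hsplit, hnull, add_zero]
  rw [this, hinter, tsum_congr hmain, ENNReal.tsum_mul_left, tsum_pi_one hμ hp2 hp1, mul_one]

lemma interval_law (hμ : IsBernoulliShift p μ) (hp2 : 1 / 2 < p) (hp1 : p < 1)
    (a b : ℤ) (f : ℤ → Bool) :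
    μ {x | ∀ i ∈ Finset.Icc a b, dep x i = f i}
      = ∏ i ∈ Finset.Icc a b, ENNReal.ofReal (if f i then 1 - p else p) := by
  haveI : IsProbabilityMeasure μ := hμ.1
  by_cases hab : a ≤ b
  case neg =>
    have he : Finset.Icc a b = ∅ := Finset.Icc_eq_empty (by omega)
    rw [he]
    simp
  case pos =>
    set n : ℕ := (b - a + 1).toNat with hn
    have hncast : (n : ℤ) = b - a + 1 := by
      rw [hn]
      omega
    set k : ℤ := a - 1 with hk
    set g : ℤ → Bool := fun i => f (i + k) with hg
    have hpre : (tr k) ⁻¹' {y | ∀ i ∈ Finset.Icc (1:ℤ) (n:ℤ), dep y i = g i}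
        = {x | ∀ i ∈ Finset.Icc a b, dep x i = f i} := by
      ext x
      simp only [mem_preimage, mem_setOf_eq, Finset.mem_Icc, dep_tr, hg]
      constructor
      · intro h i hi
        have := h (i - k) (by omega)
        simpa using this
      · intro h i hi
        have := h (i + k) (by omega)
        simpa using this
    have hEmeas : MeasurableSet {y : ℤ → Bool | ∀ i ∈ Finset.Icc (1:ℤ) (n:ℤ), dep y i = g i} := by
      have : {y : ℤ → Bool | ∀ i ∈ Finset.Icc (1:ℤ) (n:ℤ), dep y i = g i}
          = ⋂ i ∈ Finset.Icc (1:ℤ) (n:ℤ), {y | dep y i = g i} := by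
        ext y; simp
      rw [this]
      exact Set.Finite.measurableSet_biInter (Finset.finite_toSet _)
        fun i _ => measurableSet_dep i (g i)
    rw [← hpre, tr_invariant hμ k hEmeas, window_law hμ hp2 hp1 n g]
    refine Finset.prod_nbij' (fun i => i + k) (fun j => j - k) ?_ ?_ ?_ ?_ ?_
    · intro i hi
      rw [Finset.mem_Icc] at hi
      show i + k ∈ Finset.Icc a b
      rw [Finset.mem_Icc]
      omega
    · intro j hj
      rw [Finset.mem_Icc] at hj
      show j - k ∈ Finset.Icc (1:ℤ) (n:ℤ)
      rw [Finset.mem_Icc]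
      omega
    · intro i _
      show i + k - k = i
      ring
    · intro j _
      show j - k + k = j
      ring
    · intro i _
      rw [hg]

lemma general_law (hμ : IsBernoulliShift p μ) (hp2 : 1 / 2 < p) (hp1 : p < 1)
    (s : Finset ℤ) (f : ℤ → Bool) :
    μ {x | ∀ i ∈ s, dep x i = f i}
      = ∏ i ∈ s, ENNReal.ofReal (if f i then 1 - p else p) := by
  classical
  haveI : IsProbabilityMeasure μ := hμ.1
  rcases Finset.eq_empty_or_nonempty s with rfl | hne
  · simp
  set a : ℤ := s.min' hne with ha
  set b : ℤ := s.max' hne with hb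
  have hsub : s ⊆ Finset.Icc a b := by
    intro i hi
    rw [Finset.mem_Icc]
    exact ⟨Finset.min'_le s i hi, Finset.le_max' s i hi⟩
  set r : Finset ℤ := Finset.Icc a b \ s with hr
  have hdisj_rs : Disjoint s r := Finset.disjoint_sdiff
  have hunion : s ∪ r = Finset.Icc a b := Finset.union_sdiff_of_subset hsub
  set g : (↑r → Bool) → ℤ → Bool := fun t i => if hi : i ∈ r then t ⟨i, hi⟩ else f i with hgdef
  have hrsub : r ⊆ Finset.Icc a b := Finset.sdiff_subset
  have hkey : {x | ∀ i ∈ s, dep x i = f i}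
      = ⋃ t ∈ (Finset.univ : Finset (↑r → Bool)),
          {x | ∀ i ∈ Finset.Icc a b, dep x i = g t i} := by
    ext x
    simp only [mem_setOf_eq, mem_iUnion, Finset.mem_univ, true_and, exists_const]
    constructor
    · intro hx
      refine ⟨fun j => dep x j.1, fun i hi => ?_⟩
      by_cases hir : i ∈ r
      · simp only [hgdef, hir, dif_pos]
      · have his : i ∈ s := by
          have : i ∈ s ∪ r := hunion ▸ hi
          rcases Finset.mem_union.mp this with h | h
          · exact h
          · exact absurd h hir
        simp only [hgdef, hir, dif_neg, not_false_iff]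
        exact hx i his
    · rintro ⟨t, ht⟩ i hi
      have hir : i ∉ r := fun hc => (Finset.mem_sdiff.mp hc).2 hi
      have := ht i (hsub hi)
      simp only [hgdef, hir, dif_neg, not_false_iff] at this
      exact this
  have hmeasEv : ∀ t : ↑r → Bool,
      MeasurableSet {x : ℤ → Bool | ∀ i ∈ Finset.Icc a b, dep x i = g t i} := by
    intro t
    have : {x : ℤ → Bool | ∀ i ∈ Finset.Icc a b, dep x i = g t i}
        = ⋂ i ∈ Finset.Icc a b, {x | dep x i = g t i} := by
      ext x; simp
    rw [this]
    exact Set.Finite.measurableSet_biInter (Finset.finite_toSet _)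
      fun i _ => measurableSet_dep i (g t i)
  rw [hkey, measure_biUnion_finset ?_ (fun t _ => hmeasEv t)]
  swap
  · intro t _ t' _ hne
    simp only [Function.onFun]
    rw [Set.disjoint_left]
    intro x hx hx'
    obtain ⟨j, hj⟩ := Function.ne_iff.mp hne
    have h1 := hx j.1 (hrsub j.2)
    have h2 := hx' j.1 (hrsub j.2)
    simp only [hgdef, j.2, dif_pos] at h1 h2
    exact hj (by rw [← h1, ← h2])
  have hval : ∀ t : ↑r → Bool,
      μ {x : ℤ → Bool | ∀ i ∈ Finset.Icc a b, dep x i = g t i}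
        = (∏ i ∈ s, ENNReal.ofReal (if f i then 1 - p else p))
          * ∏ j ∈ r.attach, ENNReal.ofReal (if t j then 1 - p else p) := by
    intro t
    rw [interval_law hμ hp2 hp1 a b (g t), ← hunion, Finset.prod_union hdisj_rs]
    congr 1
    · refine Finset.prod_congr rfl fun i hi => ?_
      have hir : i ∉ r := fun hc => (Finset.mem_sdiff.mp hc).2 hi
      simp only [hgdef, hir, dif_neg, not_false_iff]
    · rw [← Finset.prod_attach r (fun i => ENNReal.ofReal (if g t i then 1 - p else p))]
      refine Finset.prod_congr rfl fun j _ => ?_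
      simp only [hgdef, j.2, dif_pos]
  rw [Finset.sum_congr rfl (fun t _ => hval t), ← Finset.mul_sum]
  have hsum1 : ∑ t : ↑r → Bool, ∏ j ∈ r.attach, ENNReal.ofReal (if t j then 1 - p else p)
      = 1 := by
    have hbool : ∑ b ∈ (Finset.univ : Finset Bool), ENNReal.ofReal (if b then 1 - p else p)
        = 1 := by
      rw [Fintype.sum_bool]
      norm_num
      rw [← ENNReal.ofReal_add (by linarith) (by linarith)]
      norm_num
    have h2 := Finset.prod_univ_sum (fun _ : ↑r => (Finset.univ : Finset Bool))
      (fun _ b => ENNReal.ofReal (if b then 1 - p else p))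
    rw [Fintype.piFinset_univ] at h2
    calc ∑ t : ↑r → Bool, ∏ j ∈ r.attach, ENNReal.ofReal (if t j then 1 - p else p)
        = ∑ t : ↑r → Bool, ∏ j : ↑r, ENNReal.ofReal (if t j then 1 - p else p) := by
          refine Finset.sum_congr rfl fun t _ => ?_
          rw [← Finset.univ_eq_attach]
      _ = ∏ j : ↑r, (1 : ENNReal) := by
          rw [← h2]
          exact Finset.prod_congr rfl fun j _ => hbool
      _ = 1 := Finset.prod_const_one
  rw [hsum1, mul_one]

end Geom

end Meas

end

end MF

/-- For `1/2 < p < 1` there is a monotone factor from `B(1-p, p)` to `B(p, 1-p)`. -/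
theorem monotone_factor (p : ℝ) (hp : 1 / 2 < p) (hp1 : p < 1)
    (μ ν : Measure (ℤ → Bool))
    (hμ : IsBernoulliShift p μ) (hν : IsBernoulliShift (1 - p) ν) :
    ∃ φ : (ℤ → Bool) → (ℤ → Bool),
      Measurable φ ∧
      μ.map φ = ν ∧
      (∀ᵐ x ∂μ, φ (shift x) = shift (φ x)) ∧
      (∀ x, ∀ i : ℤ, φ x i ≤ x i) := by
  classical
  set φ : (ℤ → Bool) → (ℤ → Bool) := fun x i => MF.dep x i with hφ
  have hmeas : Measurable φ := measurable_pi_lambda _ fun i => MF.measurable_dep i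
  refine ⟨φ, hmeas, ?_, ?_, ?_⟩
  · haveI := hμ.1
    haveI := hν.1
    refine MF.bernoulli_unique (Measure.isProbabilityMeasure_map hmeas.aemeasurable) hν.1 ?_
    intro s f
    rw [MeasureTheory.Measure.map_apply hmeas (MF.measurableSet_cyl s f)]
    have hpre : φ ⁻¹' MF.cyl s f = {x | ∀ i ∈ s, MF.dep x i = f i} := rfl
    rw [hpre, MF.general_law hμ hp hp1 s f, MF.cyl_measure hν s f]
    rw [ENNReal.ofReal_prod_of_nonneg (fun i _ => by
      split <;> linarith)]
    refine Finset.prod_congr rfl fun i _ => ?_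
    congr 1
    split <;> ring
  · refine MeasureTheory.ae_of_all μ fun x => funext fun i => ?_
    show MF.dep (MF.tr 1 x) i = MF.dep x (i + 1)
    exact MF.dep_tr 1 x i
  · exact fun x i => MF.dep_le x i
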